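/- Let U = U₁ × U₂ ⊆ ℂ² where U₁, U₂ ⊆ ℂ are connected open neighborhoods of 0. Define the multiplication of holomorphic vector fields X = (X₁, X₂), Y = (Y₁, Y₂) : U → ℂ² pointwise by X ∘ Y = (X₁Y₁, X₁Y₂ + X₂Y₁). Then a holomorphic map E : U → ℂ² satisfies the Euler field equation [E, X∘Y] − [E, X]∘Y − X∘[E, Y] = X∘Y for all holomorphic vector fields X, Y : U → ℂ² if and only if there exist c₁ ∈ ℂ and a holomorphic function g : U₂ → ℂ such that E(t₁, t₂) = (t₁ + c₁, g(t₂)) for all (t₁,t₂) ∈ U. -/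

import Mathlib

noncomputable section

/-- The Lie bracket `[X, Y](p) = (DY)(p)(X(p)) − (DX)(p)(Y(p))` of (holomorphic) vector
fields on (an open subset of) `ℂ²`. -/
def lieBracket (X Y : (Fin 2 → ℂ) → (Fin 2 → ℂ)) : (Fin 2 → ℂ) → (Fin 2 → ℂ) :=
  fun p => fderiv ℂ Y p (X p) - fderiv ℂ X p (Y p)

/-- The multiplication of the F-manifold `𝒩₂`: `X ∘ Y = (X₁Y₁, X₁Y₂ + X₂Y₁)`. -/
def mulN2 (X Y : (Fin 2 → ℂ) → (Fin 2 → ℂ)) : (Fin 2 → ℂ) → (Fin 2 → ℂ) :=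
  fun p => ![X p 0 * Y p 0, X p 0 * Y p 1 + X p 1 * Y p 0]

/-! ### Auxiliary lemmas -/

lemma DH.hasFDerivAt_component {G : Type*} [NormedAddCommGroup G] [NormedSpace ℂ G]
    {f : G → (Fin 2 → ℂ)} {p : G} (hf : DifferentiableAt ℂ f p) (i : Fin 2) :
    HasFDerivAt (fun x => f x i) ((ContinuousLinearMap.proj i).comp (fderiv ℂ f p)) p :=
  hasFDerivAt_pi'.1 hf.hasFDerivAt i

lemma DH.fderiv_comp_apply' {G : Type*} [NormedAddCommGroup G] [NormedSpace ℂ G]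
    {f : G → (Fin 2 → ℂ)} {p : G} (hf : DifferentiableAt ℂ f p) (i : Fin 2) (w : G) :
    fderiv ℂ (fun x => f x i) p w = fderiv ℂ f p w i := by
  rw [(DH.hasFDerivAt_component hf i).fderiv]; rfl

lemma DH.diffAt_comp' {G : Type*} [NormedAddCommGroup G] [NormedSpace ℂ G]
    {f : G → (Fin 2 → ℂ)} {p : G} (hf : DifferentiableAt ℂ f p) (i : Fin 2) :
    DifferentiableAt ℂ (fun x => f x i) p :=
  (DH.hasFDerivAt_component hf i).differentiableAt

lemma DH.fderiv_mul_apply' {f g : (Fin 2 → ℂ) → ℂ} {p w : Fin 2 → ℂ}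
    (hf : DifferentiableAt ℂ f p) (hg : DifferentiableAt ℂ g p) :
    fderiv ℂ (fun x => f x * g x) p w = fderiv ℂ f p w * g p + f p * fderiv ℂ g p w := by
  rw [fderiv_fun_mul hf hg]
  simp only [ContinuousLinearMap.add_apply, ContinuousLinearMap.coe_smul',
    Pi.smul_apply, smul_eq_mul]
  ring

lemma DH.mulN2_diffAt {X Y : (Fin 2 → ℂ) → (Fin 2 → ℂ)} {p : Fin 2 → ℂ}
    (hX : DifferentiableAt ℂ X p) (hY : DifferentiableAt ℂ Y p) :
    DifferentiableAt ℂ (mulN2 X Y) p := by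
  apply differentiableAt_pi.2
  intro i
  fin_cases i
  · simp only [mulN2, Matrix.cons_val_zero]
    exact (DH.diffAt_comp' hX 0).mul (DH.diffAt_comp' hY 0)
  · simp only [mulN2, Matrix.cons_val_one, Matrix.head_cons]
    exact ((DH.diffAt_comp' hX 0).mul (DH.diffAt_comp' hY 1)).add
      ((DH.diffAt_comp' hX 1).mul (DH.diffAt_comp' hY 0))

/-- The Euler-field expression is tensorial: it only depends on the values of `X` and `Y`
and the derivative of `E` at the point. -/
lemma DH.key {E X Y : (Fin 2 → ℂ) → (Fin 2 → ℂ)} {p : Fin 2 → ℂ}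
    (hX : DifferentiableAt ℂ X p) (hY : DifferentiableAt ℂ Y p) :
    lieBracket E (mulN2 X Y) p - mulN2 (lieBracket E X) Y p - mulN2 X (lieBracket E Y) p
      = ![fderiv ℂ E p (X p) 0 * Y p 0 + X p 0 * fderiv ℂ E p (Y p) 0
            - fderiv ℂ E p (mulN2 X Y p) 0,
          fderiv ℂ E p (X p) 0 * Y p 1 + fderiv ℂ E p (X p) 1 * Y p 0
            + X p 0 * fderiv ℂ E p (Y p) 1 + X p 1 * fderiv ℂ E p (Y p) 0
            - fderiv ℂ E p (mulN2 X Y p) 1] := by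
  have hM := DH.mulN2_diffAt hX hY
  have h0 : fderiv ℂ (mulN2 X Y) p (E p) 0
      = fderiv ℂ X p (E p) 0 * Y p 0 + X p 0 * fderiv ℂ Y p (E p) 0 := by
    rw [← DH.fderiv_comp_apply' hM 0]
    have : (fun x => mulN2 X Y x 0) = fun x => X x 0 * Y x 0 := by
      funext x; simp [mulN2]
    rw [this, DH.fderiv_mul_apply' (DH.diffAt_comp' hX 0) (DH.diffAt_comp' hY 0),
      DH.fderiv_comp_apply' hX 0, DH.fderiv_comp_apply' hY 0]
  have h1 : fderiv ℂ (mulN2 X Y) p (E p) 1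
      = fderiv ℂ X p (E p) 0 * Y p 1 + X p 0 * fderiv ℂ Y p (E p) 1
        + (fderiv ℂ X p (E p) 1 * Y p 0 + X p 1 * fderiv ℂ Y p (E p) 0) := by
    rw [← DH.fderiv_comp_apply' hM 1]
    have : (fun x => mulN2 X Y x 1) = fun x => X x 0 * Y x 1 + X x 1 * Y x 0 := by
      funext x; simp [mulN2]
    rw [this, fderiv_fun_add ((DH.diffAt_comp' hX 0).fun_mul (DH.diffAt_comp' hY 1))
      ((DH.diffAt_comp' hX 1).fun_mul (DH.diffAt_comp' hY 0))]
    simp only [ContinuousLinearMap.add_apply]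
    rw [DH.fderiv_mul_apply' (DH.diffAt_comp' hX 0) (DH.diffAt_comp' hY 1),
      DH.fderiv_mul_apply' (DH.diffAt_comp' hX 1) (DH.diffAt_comp' hY 0),
      DH.fderiv_comp_apply' hX 0, DH.fderiv_comp_apply' hX 1,
      DH.fderiv_comp_apply' hY 0, DH.fderiv_comp_apply' hY 1]
  funext i
  fin_cases i
  · simp only [Fin.zero_eta, Fin.isValue, lieBracket, Pi.sub_apply]
    rw [h0]
    simp only [mulN2, lieBracket, Pi.sub_apply, Matrix.cons_val_zero, Matrix.cons_val_one,
      Matrix.head_cons]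
    ring
  · simp only [Fin.mk_one, Fin.isValue, lieBracket, Pi.sub_apply]
    rw [h1]
    simp only [mulN2, lieBracket, Pi.sub_apply, Matrix.cons_val_zero, Matrix.cons_val_one,
      Matrix.head_cons]
    ring

lemma DH.eventually_const_of_fderiv_zero {E F : Type*} [NormedAddCommGroup E] [NormedSpace ℂ E]
    [NormedAddCommGroup F] [NormedSpace ℂ F] {s : Set E} (hs : IsOpen s)
    {f : E → F} (hf : ∀ x ∈ s, HasFDerivAt f (0 : E →L[ℂ] F) x)
    {z : E} (hz : z ∈ s) : ∀ᶠ w in nhds z, f w = f z := by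
  obtain ⟨ε, hε, hball⟩ := Metric.isOpen_iff.1 hs z hz
  filter_upwards [Metric.ball_mem_nhds z hε] with w hw
  have key := Convex.norm_image_sub_le_of_norm_hasFDerivWithin_le
    (f' := fun _ => ((0 : E →L[ℂ] F).restrictScalars ℝ))
    (fun u hu => ((hf u (hball hu)).restrictScalars ℝ).hasFDerivWithinAt)
    (C := 0) (fun u hu => by simp) (convex_ball z ε) (Metric.mem_ball_self hε) hw
  rw [zero_mul] at key
  exact sub_eq_zero.1 (by simpa using norm_le_zero_iff.1 key)

lemma DH.const_of_fderiv_zero {E F : Type*} [NormedAddCommGroup E] [NormedSpace ℂ E]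
    [NormedAddCommGroup F] [NormedSpace ℂ F] {s : Set E} (hs : IsOpen s)
    (hsc : IsPreconnected s) {f : E → F} (hf : ∀ x ∈ s, HasFDerivAt f (0 : E →L[ℂ] F) x)
    {x y : E} (hx : x ∈ s) (hy : y ∈ s) : f y = f x := by
  by_contra hne
  set A : Set E := {w | w ∈ s ∧ f w = f x} with hA
  set B : Set E := {w | w ∈ s ∧ f w ≠ f x} with hB
  have hAopen : IsOpen A := by
    rw [isOpen_iff_mem_nhds]
    rintro w ⟨hws, hwf⟩
    filter_upwards [DH.eventually_const_of_fderiv_zero hs hf hws, hs.mem_nhds hws] with u hu hus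
    exact ⟨hus, hu.trans hwf⟩
  have hBopen : IsOpen B := by
    rw [isOpen_iff_mem_nhds]
    rintro w ⟨hws, hwf⟩
    filter_upwards [DH.eventually_const_of_fderiv_zero hs hf hws, hs.mem_nhds hws] with u hu hus
    exact ⟨hus, hu ▸ hwf⟩
  obtain ⟨u, hus, ⟨-, hu1⟩, -, hu2⟩ := hsc A B hAopen hBopen
    (fun w hw => by by_cases h : f w = f x; exacts [Or.inl ⟨hw, h⟩, Or.inr ⟨hw, h⟩])
    ⟨x, hx, hx, rfl⟩ ⟨y, hy, hy, hne⟩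
  exact hu2 hu1

lemma DH.vec_decomp (w : Fin 2 → ℂ) : w = w 0 • ![(1:ℂ), 0] + w 1 • ![0, 1] := by
  funext i; fin_cases i <;> simp

/-- **Theorem 2.8(c), equation (2.7), of David–Hertling.** On the F-manifold `𝒩₂`, over a
product `U = U₁ × U₂` of connected open neighborhoods of `0` in `ℂ`, a holomorphic vector
field `E` satisfies the Euler field equation `Lie_E(∘) = ∘`, i.e.
`[E, X∘Y] − [E,X]∘Y − X∘[E,Y] = X∘Y` for all holomorphic vector fields `X, Y`, if and only
if `E = (t₁ + c₁)∂₁ + g(t₂)∂₂` for some `c₁ ∈ ℂ` and some holomorphic function `g` on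
`U₂`. -/
theorem euler_fields_on_N2
    (U₁ U₂ : Set ℂ) (hU₁ : IsOpen U₁) (hU₂ : IsOpen U₂)
    (hU₁c : IsConnected U₁) (hU₂c : IsConnected U₂)
    (h0₁ : (0 : ℂ) ∈ U₁) (h0₂ : (0 : ℂ) ∈ U₂)
    (E : (Fin 2 → ℂ) → (Fin 2 → ℂ))
    (hE : DifferentiableOn ℂ E {p | p 0 ∈ U₁ ∧ p 1 ∈ U₂}) :
    (∀ X Y : (Fin 2 → ℂ) → (Fin 2 → ℂ),
        DifferentiableOn ℂ X {p | p 0 ∈ U₁ ∧ p 1 ∈ U₂} →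
        DifferentiableOn ℂ Y {p | p 0 ∈ U₁ ∧ p 1 ∈ U₂} →
        ∀ p ∈ {p : Fin 2 → ℂ | p 0 ∈ U₁ ∧ p 1 ∈ U₂},
          lieBracket E (mulN2 X Y) p - mulN2 (lieBracket E X) Y p
            - mulN2 X (lieBracket E Y) p = mulN2 X Y p) ↔
      ∃ (c₁ : ℂ) (g : ℂ → ℂ), DifferentiableOn ℂ g U₂ ∧
        ∀ p ∈ {p : Fin 2 → ℂ | p 0 ∈ U₁ ∧ p 1 ∈ U₂}, E p = ![p 0 + c₁, g (p 1)] := by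
  set S : Set (Fin 2 → ℂ) := {p | p 0 ∈ U₁ ∧ p 1 ∈ U₂} with hSdef
  have hSopen : IsOpen S := by
    have : S = (fun p : Fin 2 → ℂ => p 0) ⁻¹' U₁ ∩ (fun p : Fin 2 → ℂ => p 1) ⁻¹' U₂ := rfl
    rw [this]
    exact (hU₁.preimage (continuous_apply 0)).inter (hU₂.preimage (continuous_apply 1))
  have hSpre : IsPreconnected S := by
    have hm : Continuous (fun q : ℂ × ℂ => (![q.1, q.2] : Fin 2 → ℂ)) := by
      apply continuous_pi
      intro i; fin_cases i
      · simpa using continuous_fst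
      · simpa using continuous_snd
    have himg : (fun q : ℂ × ℂ => (![q.1, q.2] : Fin 2 → ℂ)) '' (U₁ ×ˢ U₂) = S := by
      ext p
      constructor
      · rintro ⟨⟨a, b⟩, ⟨ha, hb⟩, rfl⟩
        exact ⟨by simpa using ha, by simpa using hb⟩
      · rintro ⟨h1, h2⟩
        exact ⟨(p 0, p 1), ⟨h1, h2⟩, by funext i; fin_cases i <;> simp⟩
    rw [← himg]
    exact (hU₁c.isPreconnected.prod hU₂c.isPreconnected).image _ hm.continuousOn
  constructor
  · -- forward direction
    intro h
    -- derivative constraints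
    have hC : ∀ q ∈ S, fderiv ℂ E q ![(1:ℂ),0] 0 = 1 ∧ fderiv ℂ E q ![(1:ℂ),0] 1 = 0 ∧
        fderiv ℂ E q ![(0:ℂ),1] 0 = 0 := by
      intro q hq
      have hEq : DifferentiableAt ℂ E q := hE.differentiableAt (hSopen.mem_nhds hq)
      have hconst : ∀ v : Fin 2 → ℂ, DifferentiableOn ℂ (fun _ : Fin 2 → ℂ => v) S :=
        fun v => differentiableOn_const v
      have h11 := h _ _ (hconst ![(1:ℂ),0]) (hconst ![(1:ℂ),0]) q hq
      have h22 := h _ _ (hconst ![(0:ℂ),1]) (hconst ![(0:ℂ),1]) q hq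
      rw [DH.key (differentiableAt_const _) (differentiableAt_const _)] at h11 h22
      have e0 := congr_fun h11 0
      have e1 := congr_fun h11 1
      have e2 := congr_fun h22 1
      simp only [mulN2, Matrix.cons_val_zero, Matrix.cons_val_one, Matrix.head_cons,
        mul_one, one_mul, mul_zero, zero_mul, add_zero, zero_add] at e0 e1 e2
      norm_num at e0 e1 e2
      have hz : (![(0:ℂ),(0:ℂ)] : Fin 2 → ℂ) = 0 := by funext i; fin_cases i <;> simp
      rw [hz, map_zero] at e2
      simp only [Pi.zero_apply] at e2
      refine ⟨e0, e1, ?_⟩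
      linear_combination e2 / 2
    have h0S : (0 : Fin 2 → ℂ) ∈ S := ⟨by simpa using h0₁, by simpa using h0₂⟩
    have hC0 : ∀ q ∈ S, ∀ w : Fin 2 → ℂ, fderiv ℂ E q w 0 = w 0 := by
      intro q hq w
      obtain ⟨ha, hb, hc⟩ := hC q hq
      conv_lhs => rw [DH.vec_decomp w]
      rw [map_add, map_smul, map_smul]
      simp only [Pi.add_apply, Pi.smul_apply, smul_eq_mul]
      rw [ha, hc]; ring
    have hfirst : ∀ p ∈ S, E p 0 = p 0 + E 0 0 := by
      have hfz : ∀ q ∈ S, HasFDerivAt (fun x : Fin 2 → ℂ => E x 0 - x 0)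
          (0 : (Fin 2 → ℂ) →L[ℂ] ℂ) q := by
        intro q hq
        have hEq : DifferentiableAt ℂ E q := hE.differentiableAt (hSopen.mem_nhds hq)
        have h1 := DH.hasFDerivAt_component hEq 0
        have h2 : HasFDerivAt (fun x : Fin 2 → ℂ => x 0)
            ((ContinuousLinearMap.proj 0 : (Fin 2 → ℂ) →L[ℂ] ℂ)) q := hasFDerivAt_apply 0 q
        have h3 := h1.sub h2
        refine h3.congr_fderiv ?_
        ext w
        simp only [ContinuousLinearMap.zero_apply, ContinuousLinearMap.sub_apply,
          ContinuousLinearMap.coe_comp', Function.comp_apply,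
          ContinuousLinearMap.proj_apply]
        rw [hC0 q hq w]; ring
      intro p hp
      have hcn := DH.const_of_fderiv_zero hSopen hSpre hfz h0S hp
      simp only [Pi.zero_apply, sub_zero] at hcn
      linear_combination hcn
    have hsecond : ∀ p ∈ S, E p 1 = E ![0, p 1] 1 := by
      intro p hp
      have hps : ∀ t ∈ U₁, (![t, p 1] : Fin 2 → ℂ) ∈ S := by
        intro t ht; exact ⟨by simp [ht], by simp [hp.2]⟩
      have hιd : ∀ t : ℂ, HasFDerivAt (fun t : ℂ => (![t, p 1] : Fin 2 → ℂ))
          (ContinuousLinearMap.pi ![(ContinuousLinearMap.id ℂ ℂ), 0]) t := by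
        intro t
        apply hasFDerivAt_pi''
        intro i
        rw [ContinuousLinearMap.proj_pi]
        fin_cases i
        · exact hasFDerivAt_id t
        · simpa using hasFDerivAt_const (p 1) t
      have hhz : ∀ t ∈ U₁, HasFDerivAt (fun t : ℂ => E ![t, p 1] 1) (0 : ℂ →L[ℂ] ℂ) t := by
        intro t ht
        have hEd : DifferentiableAt ℂ E ![t, p 1] :=
          hE.differentiableAt (hSopen.mem_nhds (hps t ht))
        have hcomp : HasFDerivAt (fun t : ℂ => E ![t, p 1])
            ((fderiv ℂ E ![t, p 1]).comp
              (ContinuousLinearMap.pi ![(ContinuousLinearMap.id ℂ ℂ), 0])) t :=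
          hEd.hasFDerivAt.comp t (hιd t)
        have h1 := hasFDerivAt_pi'.1 hcomp 1
        refine h1.congr_fderiv ?_
        refine ContinuousLinearMap.ext fun w => ?_
        have harg : (ContinuousLinearMap.pi ![(ContinuousLinearMap.id ℂ ℂ), 0]) w
            = w • ![(1:ℂ), 0] := by
          funext i; fin_cases i <;> simp [ContinuousLinearMap.pi_apply]
        simp only [ContinuousLinearMap.zero_apply, ContinuousLinearMap.coe_comp',
          Function.comp_apply, ContinuousLinearMap.proj_apply]
        rw [harg, map_smul]
        have h10 := (hC _ (hps t ht)).2.1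
        simp [h10]
      have key2 := DH.const_of_fderiv_zero (E := ℂ) (F := ℂ) hU₁ hU₁c.isPreconnected hhz
        h0₁ hp.1
      have hpp : (![p 0, p 1] : Fin 2 → ℂ) = p := by funext i; fin_cases i <;> simp
      rw [hpp] at key2
      exact key2
    refine ⟨E 0 0, fun t => E ![0, t] 1, ?_, ?_⟩
    · intro t ht
      have hmem : (![(0:ℂ), t] : Fin 2 → ℂ) ∈ S := ⟨by simpa using h0₁, by simpa using ht⟩
      have hEd : DifferentiableAt ℂ E ![(0:ℂ), t] := hE.differentiableAt (hSopen.mem_nhds hmem)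
      have hι : DifferentiableAt ℂ (fun t : ℂ => (![(0:ℂ), t] : Fin 2 → ℂ)) t := by
        apply differentiableAt_pi.2
        intro i; fin_cases i
        · simpa using differentiableAt_const (0:ℂ)
        · simpa using differentiableAt_id'
      exact (DH.diffAt_comp' (hEd.comp t hι) 1).differentiableWithinAt
    · intro p hp
      funext i; fin_cases i
      · simpa using hfirst p hp
      · simpa using hsecond p hp
  · -- backward direction
    rintro ⟨c₁, g, hg, hEeq⟩ X Y hX hY p hp
    have hEd : DifferentiableAt ℂ E p := hE.differentiableAt (hSopen.mem_nhds hp)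
    have hXd : DifferentiableAt ℂ X p := hX.differentiableAt (hSopen.mem_nhds hp)
    have hYd : DifferentiableAt ℂ Y p := hY.differentiableAt (hSopen.mem_nhds hp)
    rw [DH.key hXd hYd]
    set d : ℂ := deriv g (p 1) with hd
    have hgd : HasDerivAt g d (p 1) :=
      (hg.differentiableAt (hU₂.mem_nhds hp.2)).hasDerivAt
    have hFev : E =ᶠ[nhds p] fun q => ![q 0 + c₁, g (q 1)] := by
      filter_upwards [hSopen.mem_nhds hp] with q hq using hEeq q hq
    have hFd : HasFDerivAt (fun q : Fin 2 → ℂ => ![q 0 + c₁, g (q 1)])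
        (ContinuousLinearMap.pi
          ![(ContinuousLinearMap.proj 0 : (Fin 2 → ℂ) →L[ℂ] ℂ),
            d • (ContinuousLinearMap.proj 1 : (Fin 2 → ℂ) →L[ℂ] ℂ)]) p := by
      apply hasFDerivAt_pi''
      intro i
      rw [ContinuousLinearMap.proj_pi]
      fin_cases i
      · simpa using (hasFDerivAt_apply (0 : Fin 2) p).add_const c₁
      · simp only [Fin.mk_one, Matrix.cons_val_one, Matrix.head_cons, Matrix.cons_val_zero]
        have hcomp := (hgd.hasFDerivAt).comp p (hasFDerivAt_apply (𝕜 := ℂ) (1 : Fin 2) p)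
        refine hcomp.congr_fderiv ?_
        ext w
        simp [ContinuousLinearMap.smulRight_apply, smul_eq_mul]
        ring
    have hfE : fderiv ℂ E p = ContinuousLinearMap.pi
        ![(ContinuousLinearMap.proj 0 : (Fin 2 → ℂ) →L[ℂ] ℂ),
          d • (ContinuousLinearMap.proj 1 : (Fin 2 → ℂ) →L[ℂ] ℂ)] := by
      rw [hFev.fderiv_eq, hFd.fderiv]
    have hL0 : ∀ w : Fin 2 → ℂ, fderiv ℂ E p w 0 = w 0 := by
      intro w; rw [hfE]; simp [ContinuousLinearMap.pi_apply]
    have hL1 : ∀ w : Fin 2 → ℂ, fderiv ℂ E p w 1 = d * w 1 := by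
      intro w; rw [hfE]; simp [ContinuousLinearMap.pi_apply]
    funext i
    fin_cases i <;>
      simp only [Fin.zero_eta, Fin.mk_one, Fin.isValue, mulN2, Matrix.cons_val_zero,
        Matrix.cons_val_one, Matrix.head_cons, hL0, hL1] <;> ring

end
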